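/- Let n ≥ 6 be even. Any three pairwise distinct subsets L₁, L₂, L₃ of [n], each of size at least n/2 + 1, form a Berge triangle. -/
import Mathlib


/-- Three distinct sets `A, B, C ⊆ [n]` form a Berge triangle if there exist pairwise
distinct elements `x ∈ A ∩ B`, `y ∈ A ∩ C`, `z ∈ B ∩ C`. -/
def BergeTriangle {n : ℕ} (A B C : Finset (Fin n)) : Prop :=
  A ≠ B ∧ A ≠ C ∧ B ≠ C ∧
    ∃ x y z : Fin n, x ≠ y ∧ x ≠ z ∧ y ≠ z ∧
      x ∈ A ∩ B ∧ y ∈ A ∩ C ∧ z ∈ B ∩ C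

/-- For even `n ≥ 6`, any three pairwise distinct subsets of `[n]`, each of size at
least `n / 2 + 1`, form a Berge triangle. -/
theorem three_large_triangle (n : ℕ) (hn : 6 ≤ n) (hev : Even n)
    (L₁ L₂ L₃ : Finset (Fin n))
    (hd : [L₁, L₂, L₃].Pairwise (· ≠ ·))
    (hL₁ : n / 2 + 1 ≤ L₁.card) (hL₂ : n / 2 + 1 ≤ L₂.card) (hL₃ : n / 2 + 1 ≤ L₃.card) :
    BergeTriangle L₁ L₂ L₃ := by
  obtain ⟨k, hk⟩ := hev
  have hk2 : n / 2 = k := by omega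
  simp only [List.pairwise_cons, List.mem_cons, List.mem_singleton] at hd
  obtain ⟨h1, h2, -⟩ := hd
  have h12 : L₁ ≠ L₂ := h1 _ (Or.inl rfl)
  have h13 : L₁ ≠ L₃ := h1 _ (Or.inr (Or.inl rfl))
  have h23 : L₂ ≠ L₃ := h2 _ (Or.inl rfl)
  refine ⟨h12, h13, h23, ?_⟩
  set P := L₁ ∩ L₂ with hP
  set Q := L₁ ∩ L₃ with hQ
  set R := L₂ ∩ L₃ with hR
  -- each pairwise intersection has ≥ 2 elements
  have key : ∀ A B : Finset (Fin n), n / 2 + 1 ≤ A.card → n / 2 + 1 ≤ B.card →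
      2 ≤ (A ∩ B).card := by
    intro A B hA hB
    have h1 := Finset.card_union_add_card_inter A B
    have h2 : (A ∪ B).card ≤ n := by
      have := Finset.card_le_card (Finset.subset_univ (A ∪ B))
      simpa using this
    omega
  have hPc : 2 ≤ P.card := key _ _ hL₁ hL₂
  have hQc : 2 ≤ Q.card := key _ _ hL₁ hL₃
  have hRc : 2 ≤ R.card := key _ _ hL₂ hL₃
  -- the union of the three intersections has ≥ 3 elements
  have hU : 3 ≤ (P ∪ Q ∪ R).card := by
    by_contra hcon
    push_neg at hcon
    have hP2 : P.card ≤ 2 := by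
      have : P ⊆ P ∪ Q ∪ R := by intro x hx; exact Finset.mem_union_left _ (Finset.mem_union_left _ hx)
      have := Finset.card_le_card this
      omega
    have h1 := Finset.card_union_add_card_inter L₁ L₂
    have hPe : (L₁ ∩ L₂).card = P.card := rfl
    rw [hPe] at h1
    have huniv : L₁ ∪ L₂ = Finset.univ := by
      apply Finset.eq_univ_of_card
      have h2 : (L₁ ∪ L₂).card ≤ n := by
        have := Finset.card_le_card (Finset.subset_univ (L₁ ∪ L₂))
        simpa using this
      simp only [Fintype.card_fin]
      omega
    have hsub : L₃ ⊆ Q ∪ R := by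
      intro x hx
      have hx' : x ∈ L₁ ∪ L₂ := by rw [huniv]; exact Finset.mem_univ x
      rcases Finset.mem_union.mp hx' with h | h
      · exact Finset.mem_union_left _ (Finset.mem_inter.mpr ⟨h, hx⟩)
      · exact Finset.mem_union_right _ (Finset.mem_inter.mpr ⟨h, hx⟩)
    have hsub2 : Q ∪ R ⊆ P ∪ Q ∪ R := by
      intro x hx
      rcases Finset.mem_union.mp hx with h | h
      · exact Finset.mem_union_left _ (Finset.mem_union_right _ h)
      · exact Finset.mem_union_right _ h
    have := Finset.card_le_card (hsub.trans hsub2)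
    omega
  -- pick z ∈ R, x ∈ P with x ≠ z
  obtain ⟨z, hz⟩ := Finset.card_pos.mp (by omega : 0 < R.card)
  have herase : 0 < (P.erase z).card := by
    have := Finset.card_erase_le (a := z) (s := P)
    have := Finset.pred_card_le_card_erase (a := z) (s := P)
    omega
  obtain ⟨x, hx⟩ := Finset.card_pos.mp herase
  obtain ⟨hxz, hxP⟩ := Finset.mem_erase.mp hx
  by_cases hQ' : ∃ y ∈ Q, y ≠ x ∧ y ≠ z
  · obtain ⟨y, hyQ, hyx, hyz⟩ := hQ'
    exact ⟨x, y, z, fun h => hyx h.symm, hxz, hyz, hxP, hyQ, hz⟩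
  · push_neg at hQ'
    -- Q ⊆ {x, z}, so Q = {x, z}
    have hQsub : Q ⊆ {x, z} := by
      intro y hy
      rcases em (y = x) with h | h
      · simp [h]
      · simp [hQ' y hy h]
    have hQeq : Q = {x, z} := by
      apply Finset.eq_of_subset_of_card_le hQsub
      have : ({x, z} : Finset (Fin n)).card ≤ 2 := Finset.card_insert_le _ _ |>.trans (by simp)
      omega
    have hxQ : x ∈ Q := by rw [hQeq]; simp
    have hzQ : z ∈ Q := by rw [hQeq]; simp
    -- find w in the union outside {x, z}
    have hnsub : ¬ (P ∪ Q ∪ R ⊆ {x, z}) := by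
      intro h
      have := Finset.card_le_card h
      have : ({x, z} : Finset (Fin n)).card ≤ 2 := Finset.card_insert_le _ _ |>.trans (by simp)
      omega
    obtain ⟨w, hwU, hwxz⟩ := Finset.not_subset.mp hnsub
    simp only [Finset.mem_insert, Finset.mem_singleton, not_or] at hwxz
    obtain ⟨hwx, hwz⟩ := hwxz
    rcases Finset.mem_union.mp hwU with hw | hwR
    · rcases Finset.mem_union.mp hw with hwP | hwQ
      · exact ⟨w, x, z, hwx, hwz, hxz, hwP, hxQ, hz⟩
      · exact absurd (hQeq ▸ hwQ) (by simp [hwx, hwz])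
    · exact ⟨x, z, w, hxz, fun h => hwx h.symm, fun h => hwz h.symm, hxP, hzQ, hwR⟩
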